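/- Consensus error recursion: under the same algorithm, ‖x_{t+1} - 1 ⊗ x̄_{t+1}‖ ≤ σ_W ‖x_t - 1 ⊗ x̄_t‖ + σ_W ‖y_t - 1 ⊗ ȳ_t‖, where σ_W = ‖W - (1/n)11ᵀ‖ < 1. -/

import Mathlib

open scoped BigOperators Matrix

noncomputable section


lemma kron_norm_bound {n d : ℕ} (M : Matrix (Fin n) (Fin n) ℝ)
    (T : EuclideanSpace ℝ (Fin d) →L[ℝ] EuclideanSpace ℝ (Fin d))
    (u w : PiLp 2 (fun _ : Fin n => EuclideanSpace ℝ (Fin d)))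
    (hw : ∀ i, w i = ∑ j, M i j • T (u j)) :
    ‖w‖ ≤ ‖Matrix.toEuclideanCLM (𝕜 := ℝ) M‖ * ‖T‖ * ‖u‖ := by
  set C := ‖Matrix.toEuclideanCLM (𝕜 := ℝ) M‖ with hC
  have hCnn : 0 ≤ C := norm_nonneg _
  have hTnn : 0 ≤ ‖T‖ := norm_nonneg _
  have hsq : ‖w‖ ^ 2 ≤ (C * ‖T‖ * ‖u‖) ^ 2 := by
    have ew : ‖w‖ ^ 2 = ∑ i, ∑ k, (w i k) ^ 2 := by
      rw [PiLp.norm_sq_eq_of_L2]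
      refine Finset.sum_congr rfl fun i _ => ?_
      rw [PiLp.norm_sq_eq_of_L2]
      exact Finset.sum_congr rfl fun k _ => by rw [Real.norm_eq_abs, sq_abs]
    have hcoord : ∀ i k, w i k = ∑ j, M i j * (T (u j)) k := by
      intro i k
      rw [hw i]
      rw [WithLp.ofLp_sum, Finset.sum_apply k Finset.univ _]
      exact Finset.sum_congr rfl fun j _ => rfl
    -- for each k, bound the column
    have hcol : ∀ k, ∑ i, (w i k) ^ 2 ≤ C ^ 2 * ∑ j, ((T (u j)) k) ^ 2 := by
      intro k
      set v : EuclideanSpace ℝ (Fin n) := WithLp.toLp 2 (fun j => (T (u j)) k : Fin n → ℝ) with hv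
      have h1 : ∀ i, w i k = (Matrix.toEuclideanCLM (𝕜 := ℝ) M v) i := by
        intro i; rw [hcoord]; rfl
      have h2 : ∑ i, (w i k) ^ 2 = ‖Matrix.toEuclideanCLM (𝕜 := ℝ) M v‖ ^ 2 := by
        rw [PiLp.norm_sq_eq_of_L2]
        exact Finset.sum_congr rfl fun i _ => by
          rw [h1 i, Real.norm_eq_abs, sq_abs]
      have h3 : ‖v‖ ^ 2 = ∑ j, ((T (u j)) k) ^ 2 := by
        rw [PiLp.norm_sq_eq_of_L2]
        exact Finset.sum_congr rfl fun j _ => by rw [Real.norm_eq_abs, sq_abs]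
      rw [h2, ← h3]
      calc ‖Matrix.toEuclideanCLM (𝕜 := ℝ) M v‖ ^ 2 ≤ (C * ‖v‖) ^ 2 := by
            apply pow_le_pow_left₀ (norm_nonneg _)
            exact (Matrix.toEuclideanCLM (𝕜 := ℝ) M).le_opNorm v
        _ = C ^ 2 * ‖v‖ ^ 2 := by ring
    have hT : ∀ j, ∑ k, ((T (u j)) k) ^ 2 ≤ ‖T‖ ^ 2 * ‖u j‖ ^ 2 := by
      intro j
      have : ∑ k, ((T (u j)) k) ^ 2 = ‖T (u j)‖ ^ 2 := by
        rw [PiLp.norm_sq_eq_of_L2]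
        exact Finset.sum_congr rfl fun k _ => by rw [Real.norm_eq_abs, sq_abs]
      rw [this]
      calc ‖T (u j)‖ ^ 2 ≤ (‖T‖ * ‖u j‖) ^ 2 := by
            apply pow_le_pow_left₀ (norm_nonneg _) (T.le_opNorm _)
        _ = ‖T‖ ^ 2 * ‖u j‖ ^ 2 := by ring
    calc ‖w‖ ^ 2 = ∑ k, ∑ i, (w i k) ^ 2 := by rw [ew, Finset.sum_comm]
      _ ≤ ∑ k, C ^ 2 * ∑ j, ((T (u j)) k) ^ 2 := Finset.sum_le_sum fun k _ => hcol k
      _ = C ^ 2 * ∑ j, ∑ k, ((T (u j)) k) ^ 2 := by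
          rw [← Finset.mul_sum, Finset.sum_comm]
      _ ≤ C ^ 2 * ∑ j, ‖T‖ ^ 2 * ‖u j‖ ^ 2 := by
          apply mul_le_mul_of_nonneg_left (Finset.sum_le_sum fun j _ => hT j) (by positivity)
      _ = (C * ‖T‖ * ‖u‖) ^ 2 := by
          rw [← Finset.mul_sum]
          have : ‖u‖ ^ 2 = ∑ j, ‖u j‖ ^ 2 := PiLp.norm_sq_eq_of_L2 _ u
          rw [show (C * ‖T‖ * ‖u‖) ^ 2 = C ^ 2 * (‖T‖ ^ 2 * ‖u‖ ^ 2) by ring, this]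
  have := Real.sqrt_le_sqrt hsq
  rwa [Real.sqrt_sq (norm_nonneg w), Real.sqrt_sq (by positivity)] at this

/-- consensus error recursion
`‖x_{t+1} - 1 ⊗ x̄_{t+1}‖ ≤ σ_W ‖x_t - 1 ⊗ x̄_t‖ + σ_W ‖y_t - 1 ⊗ ȳ_t‖`. -/
theorem consensus_error_recursion {n d : ℕ} (hn : 0 < n)
    (W : Matrix (Fin n) (Fin n) ℝ)
    (hW1 : W.mulVec (fun _ => (1 : ℝ)) = fun _ => 1)
    (hW2 : Wᵀ.mulVec (fun _ => (1 : ℝ)) = fun _ => 1)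
    (J : Matrix (Fin n) (Fin n) ℝ) (hJ : J = Matrix.of fun _ _ => (1 : ℝ))
    (σW : ℝ)
    (hσ : σW = ‖Matrix.toEuclideanCLM (𝕜 := ℝ) (W - (n : ℝ)⁻¹ • J)‖)
    (hσlt : σW < 1)
    (A : Matrix (Fin d) (Fin d) ℝ)
    (hA : ‖Matrix.toEuclideanCLM (𝕜 := ℝ) A‖ ≤ 1)
    (x y : ℕ → PiLp 2 (fun _ : Fin n => EuclideanSpace ℝ (Fin d)))
    -- Algorithm: x_{t+1} = (W ⊗ A)(x_t - y_t)
    (hdyn : ∀ t i, x (t + 1) i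
      = ∑ j, W i j • (Matrix.toEuclideanCLM (𝕜 := ℝ) A) (x t j - y t j))
    (xbar ybar : ℕ → EuclideanSpace ℝ (Fin d))
    (hxbar : ∀ t, xbar t = (n : ℝ)⁻¹ • ∑ i, x t i)
    (hybar : ∀ t, ybar t = (n : ℝ)⁻¹ • ∑ i, y t i)
    (xdev ydev : ℕ → PiLp 2 (fun _ : Fin n => EuclideanSpace ℝ (Fin d)))
    (hxdev : ∀ t i, xdev t i = x t i - xbar t)
    (hydev : ∀ t i, ydev t i = y t i - ybar t) :
    ∀ t, ‖xdev (t + 1)‖ ≤ σW * ‖xdev t‖ + σW * ‖ydev t‖ := by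
  intro t
  set T := Matrix.toEuclideanCLM (𝕜 := ℝ) A with hT
  set M := W - (n : ℝ)⁻¹ • J with hM
  have hnne : (n : ℝ) ≠ 0 := Nat.cast_ne_zero.mpr hn.ne'
  have hσnn : 0 ≤ σW := hσ ▸ norm_nonneg _
  have hMij : ∀ i j, M i j = W i j - (n : ℝ)⁻¹ := by
    intro i j
    simp [hM, hJ, Matrix.sub_apply, Matrix.smul_apply]
  have hrow : ∀ i, ∑ j, W i j = 1 := by
    intro i
    have := congrFun hW1 i
    simpa [Matrix.mulVec, dotProduct] using this
  have hcol : ∀ j, ∑ i, W i j = 1 := by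
    intro j
    have := congrFun hW2 j
    simpa [Matrix.mulVec, dotProduct, Matrix.transpose_apply] using this
  have hMrow : ∀ i, ∑ j, M i j = 0 := by
    intro i
    have : ∑ j, M i j = (∑ j, W i j) - ∑ _j : Fin n, (n : ℝ)⁻¹ := by
      rw [← Finset.sum_sub_distrib]
      exact Finset.sum_congr rfl fun j _ => hMij i j
    rw [this, hrow i]
    simp [Finset.sum_const, hnne]
  set u : PiLp 2 (fun _ : Fin n => EuclideanSpace ℝ (Fin d)) := xdev t - ydev t with hu
  have huj : ∀ j, u j = (x t j - y t j) - (xbar t - ybar t) := by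
    intro j
    rw [hu, PiLp.sub_apply, hxdev, hydev]
    abel
  have hw : ∀ i, xdev (t + 1) i = ∑ j, M i j • T (u j) := by
    intro i
    have hsum : ∑ k, x (t + 1) k = ∑ j, T (x t j - y t j) := by
      calc ∑ k, x (t + 1) k = ∑ k, ∑ j, W k j • T (x t j - y t j) :=
            Finset.sum_congr rfl fun k _ => hdyn t k
        _ = ∑ j, (∑ k, W k j) • T (x t j - y t j) := by
            rw [Finset.sum_comm]
            exact Finset.sum_congr rfl fun j _ => (Finset.sum_smul).symm
        _ = ∑ j, T (x t j - y t j) := by simp [hcol]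
    have hTu : ∀ j, T (u j) = T (x t j - y t j) - T (xbar t - ybar t) := by
      intro j; rw [huj j, map_sub]
    have hstep : ∑ j, M i j • T (u j) = ∑ j, (W i j - (n : ℝ)⁻¹) • T (x t j - y t j) := by
      have expand : ∀ j, M i j • T (u j)
          = (W i j - (n : ℝ)⁻¹) • T (x t j - y t j) - M i j • T (xbar t - ybar t) := by
        intro j
        rw [hTu j, smul_sub, hMij]
      rw [Finset.sum_congr rfl fun j _ => expand j, Finset.sum_sub_distrib,
        ← Finset.sum_smul, hMrow i, zero_smul, sub_zero]
    calc xdev (t + 1) i = x (t + 1) i - xbar (t + 1) := hxdev (t + 1) i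
      _ = (∑ j, W i j • T (x t j - y t j)) - (n : ℝ)⁻¹ • ∑ j, T (x t j - y t j) := by
          rw [hdyn t i, hxbar (t + 1), hsum]
      _ = ∑ j, (W i j - (n : ℝ)⁻¹) • T (x t j - y t j) := by
          rw [Finset.smul_sum, ← Finset.sum_sub_distrib]
          exact Finset.sum_congr rfl fun j _ => (sub_smul _ _ _).symm
      _ = ∑ j, M i j • T (u j) := hstep.symm
  have key := kron_norm_bound M T u (xdev (t + 1)) hw
  have hunorm : ‖u‖ ≤ ‖xdev t‖ + ‖ydev t‖ := norm_sub_le _ _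
  calc ‖xdev (t + 1)‖ ≤ ‖Matrix.toEuclideanCLM (𝕜 := ℝ) M‖ * ‖T‖ * ‖u‖ := key
    _ = σW * ‖T‖ * ‖u‖ := by rw [hσ]
    _ ≤ σW * 1 * ‖u‖ :=
        mul_le_mul_of_nonneg_right (mul_le_mul_of_nonneg_left hA hσnn) (norm_nonneg u)
    _ = σW * ‖u‖ := by ring
    _ ≤ σW * (‖xdev t‖ + ‖ydev t‖) := mul_le_mul_of_nonneg_left hunorm hσnn
    _ = σW * ‖xdev t‖ + σW * ‖ydev t‖ := by ring
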